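/- Let H be a complex Hilbert space, ι a finite index type, and T : H → (ι → ℂ) a continuous linear map. Let (Ψ_b)_{b∈β} be a Hilbert basis (complete orthonormal family) of H. Define, as values in the extended nonnegative reals [0,∞]: B := Σ_{b∈β} Σ_{J∈ι} |T(Ψ_b)(J)|², S := ⨆_{α∈H, α≠0} (Σ_{J∈ι} |T(α)(J)|²)/‖α‖², and for each J ∈ ι, S_J := ⨆_{α∈H, α≠0} |T(α)(J)|²/‖α‖². Then S ≤ B and B ≤ Σ_{J∈ι} S_J. -/

import Mathlib

open scoped ENNReal NNReal ComplexConjugate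

lemma parseval_ennreal {H : Type*} [NormedAddCommGroup H] [InnerProductSpace ℂ H]
    {β : Type*} (Ψ : HilbertBasis β ℂ H) (v : H) :
    ∑' b : β, (‖(inner ℂ v (Ψ b) : ℂ)‖₊ : ℝ≥0∞) ^ 2 = (‖v‖₊ : ℝ≥0∞) ^ 2 := by
  have h := Ψ.hasSum_inner_mul_inner v v
  have h2 : HasSum (fun b : β => (‖(inner ℂ v (Ψ b) : ℂ)‖₊ : ℝ≥0) ^ 2) (‖v‖₊ ^ 2) := by
    rw [← NNReal.hasSum_coe]
    have hre := (Complex.reCLM : ℂ →L[ℝ] ℝ).hasSum h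
    convert hre using 2 with b
    · have hc : (inner ℂ (Ψ b) v : ℂ) = conj (inner ℂ v (Ψ b) : ℂ) := by
        rw [inner_conj_symm]
      rw [hc, Complex.mul_conj']
      push_cast
      norm_cast
    · push_cast
      rw [← inner_self_eq_norm_sq (𝕜 := ℂ) v]
      rfl
  calc ∑' b : β, (‖(inner ℂ v (Ψ b) : ℂ)‖₊ : ℝ≥0∞) ^ 2
      = ((∑' b : β, (‖(inner ℂ v (Ψ b) : ℂ)‖₊ : ℝ≥0) ^ 2 : ℝ≥0) : ℝ≥0∞) := by
        rw [ENNReal.coe_tsum h2.summable]; push_cast; rfl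
    _ = _ := by rw [h2.tsum_eq]; push_cast; rfl


/-- Abstract comparison lemma between the Bergman kernel function
`B = ∑_b ∑_J |T(Ψ_b)(J)|²` and the extremal functions
`S = ⨆_{α≠0} (∑_J |T(α)(J)|²)/‖α‖²`, `S_J = ⨆_{α≠0} |T(α)(J)|²/‖α‖²`,
all computed in `[0,∞]`. -/
theorem bergman_extremal_comparison
    {H : Type*} [NormedAddCommGroup H] [InnerProductSpace ℂ H] [CompleteSpace H]
    {ι : Type*} [Fintype ι] {β : Type*}
    (Ψ : HilbertBasis β ℂ H) (T : H →L[ℂ] (ι → ℂ))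
    (B S : ℝ≥0∞) (SJ : ι → ℝ≥0∞)
    (hB : B = ∑' b : β, ∑ J : ι, (‖T (Ψ b) J‖₊ : ℝ≥0∞) ^ 2)
    (hS : S = ⨆ (α : H) (_ : α ≠ 0),
        (∑ J : ι, (‖T α J‖₊ : ℝ≥0∞) ^ 2) / (‖α‖₊ : ℝ≥0∞) ^ 2)
    (hSJ : ∀ J : ι, SJ J = ⨆ (α : H) (_ : α ≠ 0),
        (‖T α J‖₊ : ℝ≥0∞) ^ 2 / (‖α‖₊ : ℝ≥0∞) ^ 2) :
    S ≤ B ∧ B ≤ ∑ J : ι, SJ J := by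
  set v : ι → H := fun J => (InnerProductSpace.toDual ℂ H).symm
    ((ContinuousLinearMap.proj J : (ι → ℂ) →L[ℂ] ℂ).comp T) with hv
  have hfv : ∀ J (α : H), (inner ℂ (v J) α : ℂ) = T α J := fun J α =>
    InnerProductSpace.toDual_symm_apply
  have hBsum : B = ∑ J : ι, (‖v J‖₊ : ℝ≥0∞) ^ 2 := by
    rw [hB, Summable.tsum_finsetSum (fun J _ => ENNReal.summable)]
    refine Finset.sum_congr rfl fun J _ => ?_
    rw [← parseval_ennreal Ψ (v J)]
    exact tsum_congr fun b => by rw [hfv]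
  constructor
  · rw [hS, hBsum]
    refine iSup₂_le fun α hα => ?_
    have hα2 : (‖α‖₊ : ℝ≥0∞) ^ 2 ≠ 0 :=
      pow_ne_zero 2 (ENNReal.coe_ne_zero.2 (nnnorm_ne_zero_iff.2 hα))
    rw [ENNReal.div_le_iff hα2 (ENNReal.pow_ne_top ENNReal.coe_ne_top)]
    rw [Finset.sum_mul]
    refine Finset.sum_le_sum fun J _ => ?_
    rw [← hfv J α]
    calc (‖(inner ℂ (v J) α : ℂ)‖₊ : ℝ≥0∞) ^ 2
        ≤ ((‖v J‖₊ * ‖α‖₊ : ℝ≥0) : ℝ≥0∞) ^ 2 := by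
          gcongr
          exact_mod_cast nnnorm_inner_le_nnnorm (𝕜 := ℂ) (v J) α
      _ = (‖v J‖₊ : ℝ≥0∞) ^ 2 * (‖α‖₊ : ℝ≥0∞) ^ 2 := by push_cast; ring
  · rw [hBsum]
    refine Finset.sum_le_sum fun J _ => ?_
    rw [hSJ J]
    rcases eq_or_ne (v J) 0 with h0 | h0
    · simp [h0]
    · refine le_trans ?_ (le_iSup₂ (f := fun (α : H) (_ : α ≠ 0) =>
        (‖T α J‖₊ : ℝ≥0∞) ^ 2 / (‖α‖₊ : ℝ≥0∞) ^ 2) (v J) h0)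
      rw [← hfv J (v J)]
      have hself : ‖(inner ℂ (v J) (v J) : ℂ)‖₊ = ‖v J‖₊ ^ 2 := by
        ext
        push_cast
        rw [inner_self_eq_norm_sq_to_K (𝕜 := ℂ) (v J)]
        simp
      rw [hself]
      have hne : (‖v J‖₊ : ℝ≥0∞) ^ 2 ≠ 0 :=
        pow_ne_zero 2 (ENNReal.coe_ne_zero.2 (nnnorm_ne_zero_iff.2 h0))
      rw [show ((‖v J‖₊ ^ 2 : ℝ≥0) : ℝ≥0∞) ^ 2 = (‖v J‖₊ : ℝ≥0∞) ^ 2 * (‖v J‖₊ : ℝ≥0∞) ^ 2 by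
        push_cast; ring]
      rw [mul_div_assoc, ENNReal.div_self hne (ENNReal.pow_ne_top ENNReal.coe_ne_top), mul_one]
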